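/- There exist a probability space, elements x_n, x, y of the lattice Λ of sub-σ-fields with x_n increasing to x (i.e., x₁ ≤ x₂ ≤ … and sup_n x_n = x), x_n ∧ y = 0 for all n, yet x ∧ y = y ≠ 0. In particular, the meet operation in Λ is not continuous along increasing sequences. -/

import Mathlib

open MeasureTheory Filter Topology
open scoped ENNReal

set_option synthInstance.maxHeartbeats 400000
noncomputable section

variable {Ω : Type*}

/-- The trivial σ-field augmented with all null sets: the least element `0` of `Λ`. -/
def nullSF {m0 : MeasurableSpace Ω} (μ : Measure Ω) : MeasurableSpace Ω :=
  MeasurableSpace.generateFrom {s : Set Ω | μ s = 0}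

/-- Membership in `Λ`: a sub-σ-field of `m0` containing all null sets. -/
def InLam {m0 : MeasurableSpace Ω} (μ : Measure Ω) (m : MeasurableSpace Ω) : Prop :=
  m ≤ m0 ∧ nullSF μ ≤ m

set_option synthInstance.maxHeartbeats 400000 in
/-- The type `L₂` subspace `L₂(m)` of `H = L₂(Ω, F, P)`. -/
abbrev L2S {m0 : MeasurableSpace Ω} (μ : Measure Ω) (m : MeasurableSpace Ω) :
    Submodule ℝ (Lp ℝ 2 μ) :=
  @lpMeas Ω ℝ ℝ _ _ _ m m0 2 μ

/-- The orthogonal projection of `H = L₂(Ω, F, P)` onto `L₂(m)`. -/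
def Q {m0 : MeasurableSpace Ω} (μ : Measure Ω) (m : MeasurableSpace Ω) :
    Lp ℝ 2 μ →L[ℝ] Lp ℝ 2 μ :=
  letI := Classical.dec (m ≤ m0)
  if hm : m ≤ m0 then
    haveI : Fact (m ≤ m0) := ⟨hm⟩
    (L2S μ m).subtypeL.comp ((L2S μ m).orthogonalProjectionOnto)
  else 0

/-- Strong operator convergence of the projections `Q (x n)` to `Q l`. -/
def SOTLim {m0 : MeasurableSpace Ω} (μ : Measure Ω) (x : ℕ → MeasurableSpace Ω)
    (l : MeasurableSpace Ω) : Prop :=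
  ∀ f : Lp ℝ 2 μ, Tendsto (fun n => Q μ (x n) f) atTop (𝓝 (Q μ l f))

/-! ### Auxiliary construction: a concrete counterexample on `ℕ`. -/

/-- The geometric probability mass function on `ℕ`: `p(k) = 2^{-(k+1)}`. -/
def myPMF : PMF ℕ := ⟨fun n => (2 : ℝ≥0∞)⁻¹ ^ (n + 1), by
  rw [ENNReal.summable.hasSum_iff]
  have h1 : ∑' n : ℕ, (2 : ℝ≥0∞)⁻¹ ^ (n + 1) = 2⁻¹ * ∑' n : ℕ, (2 : ℝ≥0∞)⁻¹ ^ n := by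
    simp_rw [pow_succ, mul_comm]
    exact ENNReal.tsum_mul_left
  rw [h1, ENNReal.tsum_geometric, ENNReal.one_sub_inv_two, inv_inv]
  exact ENNReal.inv_mul_cancel two_ne_zero ENNReal.ofNat_ne_top⟩

theorem myPMF_null (s : Set ℕ) (h : myPMF.toMeasure s = 0) : s = ∅ := by
  by_contra hs
  obtain ⟨k, hk⟩ := Set.nonempty_iff_ne_empty.2 hs
  have h1 : myPMF.toMeasure {k} ≤ myPMF.toMeasure s :=
    measure_mono (Set.singleton_subset_iff.2 hk)
  rw [PMF.toMeasure_apply_singleton _ _ (measurableSet_singleton k), h] at h1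
  have : myPMF k = (2 : ℝ≥0∞)⁻¹ ^ (k + 1) := rfl
  rw [this] at h1
  simp at h1

/-- The set of even naturals. -/
def evens : Set ℕ := {k | Even k}

/-- `x n` : the σ-field generated by the singletons `{0}, …, {n-1}`. -/
def xSF (n : ℕ) : MeasurableSpace ℕ :=
  MeasurableSpace.generateFrom ((fun k => ({k} : Set ℕ)) '' Set.Iio n)

theorem xSF_char {n : ℕ} {s : Set ℕ} (h : MeasurableSet[xSF n] s) :
    Set.Ici n ⊆ s ∨ s ∩ Set.Ici n = ∅ := by
  let m' : MeasurableSpace ℕ :=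
    { MeasurableSet' := fun s => Set.Ici n ⊆ s ∨ s ∩ Set.Ici n = ∅
      measurableSet_empty := Or.inr (by simp)
      measurableSet_compl := by
        rintro s (h | h)
        · exact Or.inr (by rw [Set.eq_empty_iff_forall_notMem]; rintro k ⟨hk1, hk2⟩; exact hk1 (h hk2))
        · refine Or.inl fun k hk => ?_
          rw [Set.eq_empty_iff_forall_notMem] at h
          exact fun hks => h k ⟨hks, hk⟩
      measurableSet_iUnion := by
        intro f hf
        by_cases hc : ∃ i, Set.Ici n ⊆ f i
        · obtain ⟨i, hi⟩ := hc
          exact Or.inl (hi.trans (Set.subset_iUnion f i))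
        · push_neg at hc
          refine Or.inr ?_
          rw [Set.iUnion_inter, Set.iUnion_eq_empty]
          intro i
          rcases hf i with h | h
          · exact absurd h (hc i)
          · exact h }
  have hle : xSF n ≤ m' := by
    refine MeasurableSpace.generateFrom_le ?_
    rintro t ⟨k, hk, rfl⟩
    refine Or.inr ?_
    rw [Set.eq_empty_iff_forall_notMem]
    rintro j ⟨hj1, hj2⟩
    rw [Set.mem_singleton_iff] at hj1
    subst hj1
    exact absurd hj2 (by simpa using hk)
  exact hle s h

/-- `y` : the σ-field generated by the set of evens. -/
def ySF : MeasurableSpace ℕ := MeasurableSpace.generateFrom {evens}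

theorem ySF_char {s : Set ℕ} (h : MeasurableSet[ySF] s) :
    s = ∅ ∨ s = evens ∨ s = evensᶜ ∨ s = Set.univ := by
  let P : Set ℕ → Prop := fun s =>
    (s ∩ evens = ∅ ∨ s ∩ evens = evens) ∧ (s ∩ evensᶜ = ∅ ∨ s ∩ evensᶜ = evensᶜ)
  have key : ∀ (B : Set ℕ) (t : Set ℕ), (t ∩ B = ∅ ∨ t ∩ B = B) → (tᶜ ∩ B = ∅ ∨ tᶜ ∩ B = B) := by
    rintro B t (h | h)
    · refine Or.inr (Set.inter_eq_right.2 fun k hk => ?_)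
      rw [Set.eq_empty_iff_forall_notMem] at h
      exact fun hkt => h k ⟨hkt, hk⟩
    · refine Or.inl ?_
      have hBt : B ⊆ t := by rw [← h]; exact Set.inter_subset_left
      rw [Set.eq_empty_iff_forall_notMem]
      rintro k ⟨hk1, hk2⟩
      exact hk1 (hBt hk2)
  have keyU : ∀ (B : Set ℕ) (f : ℕ → Set ℕ), (∀ i, f i ∩ B = ∅ ∨ f i ∩ B = B) →
      ((⋃ i, f i) ∩ B = ∅ ∨ (⋃ i, f i) ∩ B = B) := by
    intro B f hf
    by_cases hc : ∃ i, f i ∩ B = B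
    · obtain ⟨i, hi⟩ := hc
      refine Or.inr (Set.eq_of_subset_of_subset Set.inter_subset_right fun k hk => ?_)
      have hk' : k ∈ f i ∩ B := by rw [hi]; exact hk
      exact ⟨Set.mem_iUnion.2 ⟨i, hk'.1⟩, hk⟩
    · push_neg at hc
      refine Or.inl ?_
      rw [Set.iUnion_inter, Set.iUnion_eq_empty]
      intro i
      rcases hf i with h | h
      · exact h
      · exact absurd h (hc i)
  let m' : MeasurableSpace ℕ :=
    { MeasurableSet' := P
      measurableSet_empty := ⟨Or.inl (by simp), Or.inl (by simp)⟩
      measurableSet_compl := fun t ht => ⟨key _ t ht.1, key _ t ht.2⟩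
      measurableSet_iUnion := fun f hf =>
        ⟨keyU _ f fun i => (hf i).1, keyU _ f fun i => (hf i).2⟩ }
  have hle : ySF ≤ m' := by
    refine MeasurableSpace.generateFrom_le ?_
    rintro t rfl
    exact ⟨Or.inr (by simp), Or.inl (by simp)⟩
  obtain ⟨h1, h2⟩ := hle s h
  have hs : s = (s ∩ evens) ∪ (s ∩ evensᶜ) := by
    rw [← Set.inter_union_distrib_left, Set.union_compl_self, Set.inter_univ]
  rcases h1 with h1 | h1 <;> rcases h2 with h2 | h2 <;> rw [h1, h2] at hs
  · exact Or.inl (by simpa using hs)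
  · exact Or.inr (Or.inr (Or.inl (by simpa using hs)))
  · exact Or.inr (Or.inl (by simpa using hs))
  · exact Or.inr (Or.inr (Or.inr (by rw [hs, Set.union_compl_self])))

theorem evens_not_xSF (n : ℕ) : ¬ (Set.Ici n ⊆ evens ∨ evens ∩ Set.Ici n = ∅) := by
  rintro (h | h)
  · have : 2 * n + 1 ∈ evens := h (by omega : n ≤ 2 * n + 1)
    obtain ⟨m, hm⟩ := this
    omega
  · rw [Set.eq_empty_iff_forall_notMem] at h
    exact h (2 * n) ⟨⟨n, by ring⟩, (by omega : n ≤ 2 * n)⟩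

theorem evensc_not_xSF (n : ℕ) : ¬ (Set.Ici n ⊆ evensᶜ ∨ evensᶜ ∩ Set.Ici n = ∅) := by
  rintro (h | h)
  · exact h (by omega : n ≤ 2 * n) ⟨n, by ring⟩
  · rw [Set.eq_empty_iff_forall_notMem] at h
    refine h (2 * n + 1) ⟨?_, (by omega : n ≤ 2 * n + 1)⟩
    simp only [evens, Set.mem_compl_iff, Set.mem_setOf_eq]
    intro ⟨m, hm⟩
    omega

theorem nullSF_eq_bot : nullSF (myPMF.toMeasure) = (⊥ : MeasurableSpace ℕ) := by
  refine le_antisymm ?_ bot_le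
  refine MeasurableSpace.generateFrom_le fun t ht => ?_
  rw [MeasurableSpace.measurableSet_bot_iff]
  exact Or.inl (myPMF_null t ht)

/-- There exist a probability space and `x_n, x, y ∈ Λ` with `x_n ↑ x`, `x_n ∧ y = 0` for all
`n`, yet `x ∧ y = y ≠ 0`: the meet is not continuous along increasing sequences. -/
theorem stmt4 :
    ∃ (Ω : Type) (m0 : MeasurableSpace Ω) (μ : @Measure Ω m0),
      @IsProbabilityMeasure Ω m0 μ ∧
      ∃ (x : ℕ → MeasurableSpace Ω) (xl y : MeasurableSpace Ω),
        (∀ n, InLam μ (x n)) ∧ InLam μ xl ∧ InLam μ y ∧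
        Monotone x ∧ (⨆ n, x n) = xl ∧
        (∀ n, x n ⊓ y = nullSF μ) ∧ xl ⊓ y = y ∧ y ≠ nullSF μ := by
  refine ⟨ℕ, ⊤, myPMF.toMeasure, PMF.toMeasure.isProbabilityMeasure myPMF,
    xSF, ⊤, ySF, ?_, ?_, ?_, ?_, ?_, ?_, ?_, ?_⟩
  · exact fun n => ⟨le_top, nullSF_eq_bot ▸ bot_le⟩
  · exact ⟨le_top, nullSF_eq_bot ▸ bot_le⟩
  · exact ⟨le_top, nullSF_eq_bot ▸ bot_le⟩
  · intro a b hab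
    exact MeasurableSpace.generateFrom_mono (Set.image_mono (Set.Iio_subset_Iio hab))
  · refine le_antisymm le_top ?_
    intro s _
    have key : MeasurableSet[⨆ n, xSF n] (⋃ k ∈ s, ({k} : Set ℕ)) := by
      refine MeasurableSet.biUnion (Set.to_countable s) fun k _ => ?_
      have hk : MeasurableSet[xSF (k + 1)] {k} :=
        MeasurableSpace.measurableSet_generateFrom ⟨k, by simp, rfl⟩
      exact le_iSup xSF (k + 1) _ hk
    simpa [Set.biUnion_of_singleton] using key
  · intro n
    rw [nullSF_eq_bot]
    refine le_antisymm ?_ bot_le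
    intro s hs
    have hs' : MeasurableSet[xSF n] s ∧ MeasurableSet[ySF] s :=
      MeasurableSpace.measurableSet_inf.1 hs
    refine MeasurableSpace.measurableSet_bot_iff.2 ?_
    rcases ySF_char hs'.2 with h | h | h | h
    · exact Or.inl h
    · exact absurd (xSF_char (h ▸ hs'.1)) (evens_not_xSF n)
    · exact absurd (xSF_char (h ▸ hs'.1)) (evensc_not_xSF n)
    · exact Or.inr h
  · exact top_inf_eq ySF
  · rw [nullSF_eq_bot]
    intro hy
    have hB : MeasurableSet[ySF] evens :=
      MeasurableSpace.measurableSet_generateFrom rfl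
    rw [hy, MeasurableSpace.measurableSet_bot_iff] at hB
    rcases hB with h | h
    · rw [Set.eq_empty_iff_forall_notMem] at h
      exact h 0 ⟨0, by ring⟩
    · have : (1 : ℕ) ∈ evens := h ▸ Set.mem_univ 1
      obtain ⟨m, hm⟩ := this
      omega
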